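/- Let A be an algebra with mean value on ℝ^N. Then the spectrum Δ(A) (with the Arens/convolution product, when defined) is a topological group if and only if A is a closed subalgebra of the algebra AP(ℝ^N) of almost periodic functions. -/

import Mathlib

open MeasureTheory Filter Topology
open scoped ENNReal NNReal

noncomputable section

abbrev RN (N : ℕ) := Fin N → ℝ

/-- `f` is a bounded uniformly continuous function on `ℝ^N`. -/
def IsBUC {N : ℕ} (f : RN N → ℂ) : Prop :=
  Bornology.IsBounded (Set.range f) ∧ UniformContinuous f

/-- `f` has mean value `M`: the rescalings `x ↦ f (x/ε)` converge to the constant `M`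
weakly-* in `L∞(ℝ^N)`, i.e. tested against every integrable function. -/
def HasMeanValue {N : ℕ} (f : RN N → ℂ) (M : ℂ) : Prop :=
  ∀ φ : RN N → ℂ, Integrable φ →
    Tendsto (fun ε : ℝ => ∫ x, f (ε⁻¹ • x) * φ x) (𝓝[>] (0:ℝ)) (𝓝 (M * ∫ x, φ x))

/-- An algebra with mean value on `ℝ^N`: a closed (under uniform convergence)
subalgebra of BUC(ℝ^N) containing the constants, stable under complex conjugation,
translation invariant, all of whose elements possess a mean value. -/
structure MVAlgebra (N : ℕ) where
  carrier : Set (RN N → ℂ)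
  buc : ∀ f ∈ carrier, IsBUC f
  const_mem : ∀ c : ℂ, (fun _ => c) ∈ carrier
  add_mem : ∀ f ∈ carrier, ∀ g ∈ carrier, f + g ∈ carrier
  mul_mem : ∀ f ∈ carrier, ∀ g ∈ carrier, f * g ∈ carrier
  smul_mem : ∀ (c : ℂ), ∀ f ∈ carrier, c • f ∈ carrier
  conj_mem : ∀ f ∈ carrier, (fun x => (starRingEnd ℂ) (f x)) ∈ carrier
  translate_mem : ∀ f ∈ carrier, ∀ a : RN N, (fun x => f (x + a)) ∈ carrier
  closed : ∀ f : RN N → ℂ,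
    (∀ ε : ℝ, 0 < ε → ∃ g ∈ carrier, ∀ x, ‖f x - g x‖ ≤ ε) → f ∈ carrier
  mean_value : ∀ f ∈ carrier, ∃ M : ℂ, HasMeanValue f M

/-- A character of `A`: a multiplicative linear functional on `A`, nonzero
(normalized by `μ 1 = 1`), automatically bounded, extended by zero off `A`.
The set of characters is the spectrum `Δ(A)`. -/
def IsCharacter {N : ℕ} (A : MVAlgebra N) (μ : (RN N → ℂ) → ℂ) : Prop :=
  (∀ f ∈ A.carrier, ∀ g ∈ A.carrier, μ (f + g) = μ f + μ g) ∧
  (∀ (c : ℂ), ∀ f ∈ A.carrier, μ (c • f) = c * μ f) ∧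
  (∀ f ∈ A.carrier, ∀ g ∈ A.carrier, μ (f * g) = μ f * μ g) ∧
  μ (fun _ => (1:ℂ)) = 1 ∧
  (∀ f, f ∉ A.carrier → μ f = 0) ∧
  (∀ f ∈ A.carrier, ∀ C : ℝ, (∀ x, ‖f x‖ ≤ C) → ‖μ f‖ ≤ C)

/-- The spectrum `Δ(A)` of `A`, carrying the weak-* (pointwise convergence) topology. -/
abbrev Spectrum' {N : ℕ} (A : MVAlgebra N) :=
  {μ : (RN N → ℂ) → ℂ // IsCharacter A μ}

open Classical in
/-- The Dirac mass at `y`, as a functional (evaluation at `y` on `A`, zero off `A`). -/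
def diracFun {N : ℕ} (A : MVAlgebra N) (y : RN N) : (RN N → ℂ) → ℂ :=
  fun f => if f ∈ A.carrier then f y else 0

/-- `A` is introverted: `T_μ f (x) = μ (τ_x f)` belongs to `A` for every
character `μ` and every `f ∈ A`. -/
def Introverted {N : ℕ} (A : MVAlgebra N) : Prop :=
  ∀ μ : Spectrum' A, ∀ f ∈ A.carrier,
    (fun x => μ.1 (fun z => f (z + x))) ∈ A.carrier

/-- `mul` is the Arens product on `Δ(A)`: `(μν)(f) = μ (T_ν f)` where
`T_ν f (x) = ν (f (· + x))`. -/
def IsArensMul {N : ℕ} (A : MVAlgebra N)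
    (mul : Spectrum' A → Spectrum' A → Spectrum' A) : Prop :=
  ∀ μ ν : Spectrum' A, ∀ f ∈ A.carrier,
    (mul μ ν).1 f = μ.1 (fun x => ν.1 (fun z => f (z + x)))

/-- The kernel `K(Δ(A)) = ⋂_{s} s·Δ(A)` of the semigroup `Δ(A)`. -/
def kern {N : ℕ} {A : MVAlgebra N}
    (mul : Spectrum' A → Spectrum' A → Spectrum' A) : Set (Spectrum' A) :=
  ⋂ s : Spectrum' A, Set.range (mul s)

/-- The translate of a bounded continuous function. -/
def translateBCF {N : ℕ} (F : BoundedContinuousFunction (RN N) ℂ) (a : RN N) :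
    BoundedContinuousFunction (RN N) ℂ :=
  F.compContinuous ⟨fun x => x + a, by fun_prop⟩

/-- `f` is (Bohr) almost periodic: its orbit under translations is relatively
norm-compact in `BUC(ℝ^N)`. -/
def IsAP {N : ℕ} (f : RN N → ℂ) : Prop :=
  ∃ F : BoundedContinuousFunction (RN N) ℂ, ⇑F = f ∧
    IsCompact (closure (Set.range fun a : RN N => translateBCF F a))

namespace Stmt8

variable {N : ℕ} (A : MVAlgebra N)

theorem char_add (μ : Spectrum' A) {f g : RN N → ℂ} (hf : f ∈ A.carrier) (hg : g ∈ A.carrier) :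
    μ.1 (f + g) = μ.1 f + μ.1 g := μ.2.1 f hf g hg

theorem char_smul (μ : Spectrum' A) (c : ℂ) {f : RN N → ℂ} (hf : f ∈ A.carrier) :
    μ.1 (c • f) = c * μ.1 f := μ.2.2.1 c f hf

theorem char_mul (μ : Spectrum' A) {f g : RN N → ℂ} (hf : f ∈ A.carrier) (hg : g ∈ A.carrier) :
    μ.1 (f * g) = μ.1 f * μ.1 g := μ.2.2.2.1 f hf g hg

theorem char_one (μ : Spectrum' A) : μ.1 (fun _ => (1:ℂ)) = 1 := μ.2.2.2.2.1

theorem char_zero (μ : Spectrum' A) {f : RN N → ℂ} (hf : f ∉ A.carrier) : μ.1 f = 0 :=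
  μ.2.2.2.2.2.1 f hf

theorem char_bound (μ : Spectrum' A) {f : RN N → ℂ} (hf : f ∈ A.carrier) {C : ℝ}
    (hC : ∀ x, ‖f x‖ ≤ C) : ‖μ.1 f‖ ≤ C := μ.2.2.2.2.2.2 f hf C hC

theorem char_const (μ : Spectrum' A) (c : ℂ) : μ.1 (fun _ => c) = c := by
  have h : (fun _ : RN N => c) = c • (fun _ => (1:ℂ)) := by funext x; simp
  rw [h, char_smul A μ c (A.const_mem 1), char_one A μ, mul_one]

theorem mem_sub {f g : RN N → ℂ} (hf : f ∈ A.carrier) (hg : g ∈ A.carrier) :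
    (fun x => f x - g x) ∈ A.carrier := by
  have h : (fun x => f x - g x) = f + (-1 : ℂ) • g := by
    funext x; simp [sub_eq_add_neg]
  rw [h]; exact A.add_mem f hf _ (A.smul_mem (-1) g hg)

theorem char_sub (μ : Spectrum' A) {f g : RN N → ℂ} (hf : f ∈ A.carrier) (hg : g ∈ A.carrier) :
    μ.1 (fun x => f x - g x) = μ.1 f - μ.1 g := by
  have h : (fun x => f x - g x) = f + (-1 : ℂ) • g := by
    funext x; simp [sub_eq_add_neg]
  rw [h, char_add A μ hf (A.smul_mem (-1) g hg), char_smul A μ (-1) hg]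
  ring

theorem char_dist (μ : Spectrum' A) {f g : RN N → ℂ} (hf : f ∈ A.carrier) (hg : g ∈ A.carrier)
    {C : ℝ} (hC : ∀ x, ‖f x - g x‖ ≤ C) : ‖μ.1 f - μ.1 g‖ ≤ C := by
  rw [← char_sub A μ hf hg]
  exact char_bound A μ (mem_sub A hf hg) hC

theorem mem_finsum {ι : Type*} (s : Finset ι) (F : ι → RN N → ℂ)
    (h : ∀ i ∈ s, F i ∈ A.carrier) : (fun x => ∑ i ∈ s, F i x) ∈ A.carrier := by
  classical
  induction s using Finset.induction_on with
  | empty => simpa using A.const_mem 0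
  | @insert a s ha ih =>
    have h1 : (fun x => ∑ i ∈ insert a s, F i x) = F a + fun x => ∑ i ∈ s, F i x := by
      funext x; simp [Finset.sum_insert ha]
    rw [h1]
    exact A.add_mem _ (h a (Finset.mem_insert_self a s)) _
      (ih fun i hi => h i (Finset.mem_insert_of_mem hi))

theorem char_finsum {ι : Type*} (μ : Spectrum' A) (s : Finset ι) (F : ι → RN N → ℂ)
    (h : ∀ i ∈ s, F i ∈ A.carrier) :
    μ.1 (fun x => ∑ i ∈ s, F i x) = ∑ i ∈ s, μ.1 (F i) := by
  classical
  induction s using Finset.induction_on with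
  | empty => simpa using char_const A μ 0
  | @insert a s ha ih =>
    have h1 : (fun x => ∑ i ∈ insert a s, F i x) = F a + fun x => ∑ i ∈ s, F i x := by
      funext x; simp [Finset.sum_insert ha]
    rw [h1, char_add A μ (h a (Finset.mem_insert_self a s))
      (mem_finsum A s F fun i hi => h i (Finset.mem_insert_of_mem hi)),
      ih fun i hi => h i (Finset.mem_insert_of_mem hi), Finset.sum_insert ha]

theorem exists_bound {f : RN N → ℂ} (hf : f ∈ A.carrier) : ∃ C : ℝ, ∀ x, ‖f x‖ ≤ C := by
  obtain ⟨C, hC⟩ := (isBounded_iff_forall_norm_le).1 (A.buc f hf).1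
  exact ⟨C, fun x => hC _ ⟨x, rfl⟩⟩

end Stmt8
namespace Stmt8

variable {N : ℕ} (A : MVAlgebra N)

theorem isCharacter_dirac (y : RN N) : IsCharacter A (diracFun A y) := by
  classical
  refine ⟨?_, ?_, ?_, ?_, ?_, ?_⟩
  · intro f hf g hg
    simp [diracFun, hf, hg, A.add_mem f hf g hg]
  · intro c f hf
    simp [diracFun, hf, A.smul_mem c f hf]
  · intro f hf g hg
    simp [diracFun, hf, hg, A.mul_mem f hf g hg]
  · simp [diracFun, A.const_mem 1]
  · intro f hf; simp [diracFun, hf]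
  · intro f hf C hC
    simpa [diracFun, hf] using hC y

def dirac (y : RN N) : Spectrum' A := ⟨diracFun A y, isCharacter_dirac A y⟩

theorem dirac_apply {y : RN N} {f : RN N → ℂ} (hf : f ∈ A.carrier) :
    (dirac A y).1 f = f y := by
  classical
  simp [dirac, diracFun, hf]

instance : CompactSpace (Spectrum' A) := by
  classical
  set S : Set ((RN N → ℂ) → ℂ) := {μ | IsCharacter A μ} with hS
  have hbd : ∀ g : RN N → ℂ, ∃ C : ℝ, 0 ≤ C ∧ (g ∈ A.carrier → ∀ x, ‖g x‖ ≤ C) := by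
    intro g
    by_cases hg : g ∈ A.carrier
    · obtain ⟨C, hC⟩ := exists_bound A hg
      exact ⟨max C 0, le_max_right _ _, fun _ x => (hC x).trans (le_max_left _ _)⟩
    · exact ⟨0, le_refl _, fun h => absurd h hg⟩
  choose C hC0 hCb using hbd
  have hsub : S ⊆ Set.univ.pi fun g => Metric.closedBall (0:ℂ) (C g) := by
    intro μ hμ g _
    simp only [Metric.mem_closedBall, dist_zero_right]
    by_cases hg : g ∈ A.carrier
    · exact (⟨μ, hμ⟩ : Spectrum' A).2.2.2.2.2.2 g hg (C g) (hCb g hg)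
    · rw [hμ.2.2.2.2.1 g hg]; simpa using hC0 g
  have hTc : IsCompact (Set.univ.pi fun g : RN N → ℂ => Metric.closedBall (0:ℂ) (C g)) :=
    isCompact_univ_pi fun g => isCompact_closedBall _ _
  have hclosed : IsClosed S := by
    have h1 : S =
        {μ : (RN N → ℂ) → ℂ | ∀ f ∈ A.carrier, ∀ g ∈ A.carrier, μ (f + g) = μ f + μ g} ∩
        ({μ | ∀ (c : ℂ), ∀ f ∈ A.carrier, μ (c • f) = c * μ f} ∩
        ({μ | ∀ f ∈ A.carrier, ∀ g ∈ A.carrier, μ (f * g) = μ f * μ g} ∩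
        ({μ | μ (fun _ => (1:ℂ)) = 1} ∩
        ({μ | ∀ f, f ∉ A.carrier → μ f = 0} ∩
         {μ | ∀ f ∈ A.carrier, ∀ C : ℝ, (∀ x, ‖f x‖ ≤ C) → ‖μ f‖ ≤ C})))) := by
      ext μ
      simp only [hS, Set.mem_setOf_eq, Set.mem_inter_iff, IsCharacter]
    rw [h1]
    have e1 : IsClosed {μ : (RN N → ℂ) → ℂ |
        ∀ f ∈ A.carrier, ∀ g ∈ A.carrier, μ (f + g) = μ f + μ g} := by
      have : {μ : (RN N → ℂ) → ℂ | ∀ f ∈ A.carrier, ∀ g ∈ A.carrier, μ (f + g) = μ f + μ g} =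
          ⋂ f, ⋂ (_ : f ∈ A.carrier), ⋂ g, ⋂ (_ : g ∈ A.carrier),
            {μ | μ (f + g) = μ f + μ g} := by ext μ; simp
      rw [this]
      exact isClosed_iInter fun f => isClosed_iInter fun _ => isClosed_iInter fun g =>
        isClosed_iInter fun _ => isClosed_eq (continuous_apply _)
          ((continuous_apply f).add (continuous_apply g))
    have e2 : IsClosed {μ : (RN N → ℂ) → ℂ | ∀ (c : ℂ), ∀ f ∈ A.carrier, μ (c • f) = c * μ f} := by
      have : {μ : (RN N → ℂ) → ℂ | ∀ (c : ℂ), ∀ f ∈ A.carrier, μ (c • f) = c * μ f} =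
          ⋂ c, ⋂ f, ⋂ (_ : f ∈ A.carrier), {μ | μ (c • f) = c * μ f} := by ext μ; simp
      rw [this]
      exact isClosed_iInter fun c => isClosed_iInter fun f => isClosed_iInter fun _ =>
        isClosed_eq (continuous_apply _) ((continuous_apply f).const_smul c)
    have e3 : IsClosed {μ : (RN N → ℂ) → ℂ |
        ∀ f ∈ A.carrier, ∀ g ∈ A.carrier, μ (f * g) = μ f * μ g} := by
      have : {μ : (RN N → ℂ) → ℂ | ∀ f ∈ A.carrier, ∀ g ∈ A.carrier, μ (f * g) = μ f * μ g} =
          ⋂ f, ⋂ (_ : f ∈ A.carrier), ⋂ g, ⋂ (_ : g ∈ A.carrier),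
            {μ | μ (f * g) = μ f * μ g} := by ext μ; simp
      rw [this]
      exact isClosed_iInter fun f => isClosed_iInter fun _ => isClosed_iInter fun g =>
        isClosed_iInter fun _ => isClosed_eq (continuous_apply _)
          ((continuous_apply f).mul (continuous_apply g))
    have e4 : IsClosed {μ : (RN N → ℂ) → ℂ | μ (fun _ => (1:ℂ)) = 1} :=
      isClosed_eq (continuous_apply _) continuous_const
    have e5 : IsClosed {μ : (RN N → ℂ) → ℂ | ∀ f, f ∉ A.carrier → μ f = 0} := by
      have : {μ : (RN N → ℂ) → ℂ | ∀ f, f ∉ A.carrier → μ f = 0} =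
          ⋂ f, ⋂ (_ : f ∉ A.carrier), {μ | μ f = 0} := by ext μ; simp
      rw [this]
      exact isClosed_iInter fun f => isClosed_iInter fun _ =>
        isClosed_eq (continuous_apply _) continuous_const
    have e6 : IsClosed {μ : (RN N → ℂ) → ℂ |
        ∀ f ∈ A.carrier, ∀ C : ℝ, (∀ x, ‖f x‖ ≤ C) → ‖μ f‖ ≤ C} := by
      have : {μ : (RN N → ℂ) → ℂ | ∀ f ∈ A.carrier, ∀ C : ℝ, (∀ x, ‖f x‖ ≤ C) → ‖μ f‖ ≤ C} =
          ⋂ f, ⋂ (_ : f ∈ A.carrier), ⋂ C : ℝ, ⋂ (_ : ∀ x, ‖f x‖ ≤ C),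
            {μ | ‖μ f‖ ≤ C} := by ext μ; simp
      rw [this]
      exact isClosed_iInter fun f => isClosed_iInter fun _ => isClosed_iInter fun C =>
        isClosed_iInter fun _ => isClosed_le (continuous_apply f).norm continuous_const
    exact e1.inter (e2.inter (e3.inter (e4.inter (e5.inter e6))))
  have hScompact : IsCompact S := hTc.of_isClosed_subset hclosed hsub
  exact isCompact_iff_compactSpace.mp hScompact

end Stmt8
namespace Stmt8

variable {N : ℕ} (A : MVAlgebra N)

theorem dirac_dense (μ : Spectrum' A) (s : Finset (RN N → ℂ)) (hs : ∀ g ∈ s, g ∈ A.carrier)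
    {ε : ℝ} (hε : 0 < ε) : ∃ a : RN N, ∀ g ∈ s, ‖μ.1 g - g a‖ < ε := by
  classical
  by_contra hcon
  push_neg at hcon
  -- hcon : ∀ a, ∃ g ∈ s, ε ≤ ‖μ.1 g - g a‖
  set h : (RN N → ℂ) → RN N → ℂ := fun g x => g x - μ.1 g with hh
  have hhmem : ∀ g ∈ s, h g ∈ A.carrier := by
    intro g hg
    exact mem_sub A (hs g hg) (A.const_mem (μ.1 g))
  have hμh : ∀ g ∈ s, μ.1 (h g) = 0 := by
    intro g hg
    have : μ.1 (h g) = μ.1 g - μ.1 (fun _ => μ.1 g) :=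
      char_sub A μ (hs g hg) (A.const_mem (μ.1 g))
    rw [this, char_const A μ, sub_self]
  set T : (RN N → ℂ) → RN N → ℂ := fun g => h g * fun x => (starRingEnd ℂ) (h g x) with hT
  have hTmem : ∀ g ∈ s, T g ∈ A.carrier := fun g hg =>
    A.mul_mem _ (hhmem g hg) _ (A.conj_mem _ (hhmem g hg))
  set G : RN N → ℂ := fun x => ∑ g ∈ s, T g x with hG
  have hGmem : G ∈ A.carrier := mem_finsum A s T hTmem
  have hμG : μ.1 G = 0 := by
    rw [hG]
    rw [char_finsum A μ s T hTmem]
    refine Finset.sum_eq_zero fun g hg => ?_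
    rw [hT]
    have := char_mul A μ (hhmem g hg) (A.conj_mem _ (hhmem g hg))
    rw [this, hμh g hg, zero_mul]
  have hGval : ∀ x, G x = ((∑ g ∈ s, Complex.normSq (h g x) : ℝ) : ℂ) := by
    intro x
    rw [hG]
    push_cast
    refine Finset.sum_congr rfl fun g hg => ?_
    rw [hT]
    exact Complex.mul_conj (h g x)
  have hGlb : ∀ x, ε ^ 2 ≤ ∑ g ∈ s, Complex.normSq (h g x) := by
    intro x
    obtain ⟨g, hg, hge⟩ := hcon x
    have h1 : ε ^ 2 ≤ Complex.normSq (h g x) := by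
      have : ε ≤ ‖h g x‖ := by
        rw [hh]
        calc ε ≤ ‖μ.1 g - g x‖ := hge
        _ = ‖g x - μ.1 g‖ := norm_sub_rev _ _
      calc ε ^ 2 ≤ ‖h g x‖ ^ 2 := by
            exact pow_le_pow_left₀ hε.le this 2
      _ = Complex.normSq (h g x) := by
            rw [Complex.sq_norm]
    refine h1.trans (Finset.single_le_sum (f := fun i => Complex.normSq (h i x))
      (fun i _ => Complex.normSq_nonneg _) hg)
  obtain ⟨C, hC⟩ := exists_bound A hGmem
  have hnorm : ∀ x, ‖G x‖ = ∑ g ∈ s, Complex.normSq (h g x) := by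
    intro x
    rw [hGval x, Complex.norm_real, Real.norm_eq_abs,
      abs_of_nonneg (Finset.sum_nonneg fun g _ => Complex.normSq_nonneg _)]
  -- consider C - G
  have hCeps : ε ^ 2 ≤ C := (hGlb 0).trans (hnorm 0 ▸ hC 0)
  set H : RN N → ℂ := fun x => (C : ℂ) - G x with hH
  have hHmem : H ∈ A.carrier := mem_sub A (A.const_mem (C : ℂ)) hGmem
  have hμH : μ.1 H = (C : ℂ) := by
    have : μ.1 H = μ.1 (fun _ => (C:ℂ)) - μ.1 G := char_sub A μ (A.const_mem _) hGmem
    rw [this, char_const A μ, hμG, sub_zero]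
  have hHb : ∀ x, ‖H x‖ ≤ C - ε ^ 2 := by
    intro x
    show ‖(C:ℂ) - G x‖ ≤ C - ε ^ 2
    have h1 : G x = ((∑ g ∈ s, Complex.normSq (h g x) : ℝ) : ℂ) := hGval x
    rw [h1]
    rw [show ((C:ℂ) - ((∑ g ∈ s, Complex.normSq (h g x) : ℝ) : ℂ)) =
      (((C - ∑ g ∈ s, Complex.normSq (h g x) : ℝ)) : ℂ) by push_cast; ring]
    rw [Complex.norm_real, Real.norm_eq_abs]
    have hle : ∑ g ∈ s, Complex.normSq (h g x) ≤ C := by rw [← hnorm x]; exact hC x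
    rw [abs_of_nonneg (by linarith)]
    linarith [hGlb x]
  have := char_bound A μ hHmem hHb
  rw [hμH, Complex.norm_real, Real.norm_eq_abs, abs_of_nonneg (by nlinarith)] at this
  nlinarith

end Stmt8
namespace Stmt8

variable {N : ℕ} (A : MVAlgebra N)

theorem orbit_net {f : RN N → ℂ} (hf : IsAP f) {ε : ℝ} (hε : 0 < ε) :
    ∃ t : Finset (RN N), ∀ x : RN N, ∃ b ∈ t, ∀ z, ‖f (z + x) - f (z + b)‖ ≤ ε := by
  obtain ⟨F, hF, hK⟩ := hf
  have hcover : closure (Set.range fun a : RN N => translateBCF F a) ⊆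
      ⋃ a : RN N, Metric.ball (translateBCF F a) (ε / 2) := by
    intro G hG
    obtain ⟨G', ⟨a, rfl⟩, hG'⟩ := Metric.mem_closure_iff.1 hG (ε / 2) (by linarith)
    exact Set.mem_iUnion.2 ⟨a, by simpa [Metric.mem_ball, dist_comm] using hG'⟩
  obtain ⟨t, ht⟩ := hK.elim_finite_subcover _ (fun a => Metric.isOpen_ball) hcover
  refine ⟨t, fun x => ?_⟩
  have hx : translateBCF F x ∈ closure (Set.range fun a : RN N => translateBCF F a) :=
    subset_closure ⟨x, rfl⟩
  obtain ⟨b, hb, hdist⟩ := Set.mem_iUnion₂.1 (ht hx)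
  refine ⟨b, hb, fun z => ?_⟩
  have h1 : dist (translateBCF F x z) (translateBCF F b z) ≤
      dist (translateBCF F x) (translateBCF F b) :=
    BoundedContinuousFunction.dist_coe_le_dist z
  have h2 : dist (translateBCF F x) (translateBCF F b) < ε / 2 := Metric.mem_ball.1 hdist
  have h3 : translateBCF F x z = f (z + x) := by
    simp [translateBCF, ← hF]
  have h4 : translateBCF F b z = f (z + b) := by
    simp [translateBCF, ← hF]
  rw [h3, h4, dist_eq_norm] at h1
  linarith

theorem introverted_of_ap (hAP : ∀ f ∈ A.carrier, IsAP f) : Introverted A := by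
  classical
  intro μ f hf
  apply A.closed
  intro ε hε
  obtain ⟨t, ht⟩ := orbit_net (hAP f hf) (show (0:ℝ) < ε / 3 by linarith)
  set s : Finset (RN N → ℂ) := t.image (fun b => fun z => f (z + b)) with hs
  have hsmem : ∀ g ∈ s, g ∈ A.carrier := by
    intro g hg
    obtain ⟨b, _, rfl⟩ := Finset.mem_image.1 hg
    exact A.translate_mem f hf b
  obtain ⟨a, ha⟩ := dirac_dense A μ s hsmem (show (0:ℝ) < ε/3 by linarith)
  refine ⟨fun x => f (x + a), A.translate_mem f hf a, fun x => ?_⟩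
  obtain ⟨b, hb, hbz⟩ := ht x
  have h1 : ‖μ.1 (fun z => f (z + x)) - μ.1 (fun z => f (z + b))‖ ≤ ε / 3 :=
    char_dist A μ (A.translate_mem f hf x) (A.translate_mem f hf b) hbz
  have h2 : ‖μ.1 (fun z => f (z + b)) - f (a + b)‖ < ε / 3 :=
    ha _ (Finset.mem_image.2 ⟨b, hb, rfl⟩)
  have h3 : ‖f (a + b) - f (x + a)‖ ≤ ε / 3 := by
    have := hbz a
    rw [norm_sub_rev] at this
    rwa [show x + a = a + x from add_comm x a]
  calc ‖μ.1 (fun z => f (z + x)) - f (x + a)‖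
      ≤ ‖μ.1 (fun z => f (z + x)) - μ.1 (fun z => f (z + b))‖ +
        ‖μ.1 (fun z => f (z + b)) - f (a + b)‖ + ‖f (a + b) - f (x + a)‖ := by
        have := norm_sub_le_norm_sub_add_norm_sub (μ.1 (fun z => f (z + x)))
          (μ.1 (fun z => f (z + b))) (f (x + a))
        have h4 := norm_sub_le_norm_sub_add_norm_sub (μ.1 (fun z => f (z + b)))
          (f (a + b)) (f (x + a))
        linarith
    _ ≤ ε := by linarith

end Stmt8
namespace Stmt8

variable {N : ℕ} (A : MVAlgebra N)

def Tmap (ν : Spectrum' A) (f : RN N → ℂ) : RN N → ℂ := fun x => ν.1 fun z => f (z + x)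

theorem Tmap_mem (hI : Introverted A) (ν : Spectrum' A) {f : RN N → ℂ} (hf : f ∈ A.carrier) :
    Tmap A ν f ∈ A.carrier := hI ν f hf

theorem Tmap_add (ν : Spectrum' A) {f g : RN N → ℂ} (hf : f ∈ A.carrier) (hg : g ∈ A.carrier) :
    Tmap A ν (f + g) = Tmap A ν f + Tmap A ν g := by
  funext x
  exact char_add A ν (A.translate_mem f hf x) (A.translate_mem g hg x)

theorem Tmap_smul (ν : Spectrum' A) (c : ℂ) {f : RN N → ℂ} (hf : f ∈ A.carrier) :
    Tmap A ν (c • f) = c • Tmap A ν f := by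
  funext x
  exact char_smul A ν c (A.translate_mem f hf x)

theorem Tmap_mul (ν : Spectrum' A) {f g : RN N → ℂ} (hf : f ∈ A.carrier) (hg : g ∈ A.carrier) :
    Tmap A ν (f * g) = Tmap A ν f * Tmap A ν g := by
  funext x
  exact char_mul A ν (A.translate_mem f hf x) (A.translate_mem g hg x)

theorem Tmap_one (ν : Spectrum' A) : Tmap A ν (fun _ => (1:ℂ)) = fun _ => (1:ℂ) := by
  funext x
  exact char_one A ν

theorem Tmap_bound (ν : Spectrum' A) {f : RN N → ℂ} (hf : f ∈ A.carrier) {C : ℝ}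
    (hC : ∀ x, ‖f x‖ ≤ C) : ∀ x, ‖Tmap A ν f x‖ ≤ C := fun x =>
  char_bound A ν (A.translate_mem f hf x) fun z => hC (z + x)

open Classical in
def amul (hI : Introverted A) (μ ν : Spectrum' A) : Spectrum' A :=
  ⟨fun f => if hf : f ∈ A.carrier then μ.1 (Tmap A ν f) else 0, by
    refine ⟨?_, ?_, ?_, ?_, ?_, ?_⟩
    · intro f hf g hg
      dsimp only
      rw [dif_pos (A.add_mem f hf g hg), dif_pos hf, dif_pos hg, Tmap_add A ν hf hg]
      exact char_add A μ (Tmap_mem A hI ν hf) (Tmap_mem A hI ν hg)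
    · intro c f hf
      dsimp only
      rw [dif_pos (A.smul_mem c f hf), dif_pos hf, Tmap_smul A ν c hf]
      exact char_smul A μ c (Tmap_mem A hI ν hf)
    · intro f hf g hg
      dsimp only
      rw [dif_pos (A.mul_mem f hf g hg), dif_pos hf, dif_pos hg, Tmap_mul A ν hf hg]
      exact char_mul A μ (Tmap_mem A hI ν hf) (Tmap_mem A hI ν hg)
    · dsimp only
      rw [dif_pos (A.const_mem 1), Tmap_one A ν]
      exact char_one A μ
    · intro f hf; dsimp only; rw [dif_neg hf]
    · intro f hf C hC
      dsimp only
      rw [dif_pos hf]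
      exact char_bound A μ (Tmap_mem A hI ν hf) (Tmap_bound A ν hf hC)⟩

theorem amul_apply (hI : Introverted A) (μ ν : Spectrum' A) {f : RN N → ℂ}
    (hf : f ∈ A.carrier) : (amul A hI μ ν).1 f = μ.1 (Tmap A ν f) := dif_pos hf

theorem amul_apply' (hI : Introverted A) (μ ν : Spectrum' A) {f : RN N → ℂ}
    (hf : f ∉ A.carrier) : (amul A hI μ ν).1 f = 0 := dif_neg hf

theorem amul_arens (hI : Introverted A) : IsArensMul A (amul A hI) := by
  intro μ ν f hf
  exact amul_apply A hI μ ν hf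

theorem amul_assoc (hI : Introverted A) (μ ν ρ : Spectrum' A) :
    amul A hI (amul A hI μ ν) ρ = amul A hI μ (amul A hI ν ρ) := by
  apply Subtype.ext
  funext f
  by_cases hf : f ∈ A.carrier
  · rw [amul_apply A hI _ _ hf, amul_apply A hI _ _ hf, amul_apply A hI μ ν (Tmap_mem A hI ρ hf)]
    have hkey : Tmap A ν (Tmap A ρ f) = Tmap A (amul A hI ν ρ) f := by
      funext x
      show ν.1 (fun z => Tmap A ρ f (z + x)) = (amul A hI ν ρ).1 fun z => f (z + x)
      rw [amul_apply A hI ν ρ (A.translate_mem f hf x)]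
      have h2 : (fun z => Tmap A ρ f (z + x)) = Tmap A ρ fun z => f (z + x) := by
        funext z
        show ρ.1 (fun w => f (w + (z + x))) = ρ.1 fun w => f (w + z + x)
        have h3 : (fun w => f (w + (z + x))) = fun w => f (w + z + x) := by
          funext w
          rw [add_assoc]
        rw [h3]
      rw [h2]
    rw [hkey]
  · rw [amul_apply' A hI _ _ hf, amul_apply' A hI _ _ hf]

theorem amul_dirac_zero_left (hI : Introverted A) (μ : Spectrum' A) :
    amul A hI (dirac A 0) μ = μ := by
  apply Subtype.ext
  funext f
  by_cases hf : f ∈ A.carrier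
  · rw [amul_apply A hI _ _ hf, dirac_apply A (Tmap_mem A hI μ hf)]
    show μ.1 (fun z => f (z + 0)) = μ.1 f
    have h2 : (fun z => f (z + 0)) = f := by
      funext z
      rw [add_zero]
    rw [h2]
  · rw [amul_apply' A hI _ _ hf, char_zero A μ hf]

theorem amul_dirac_zero_right (hI : Introverted A) (μ : Spectrum' A) :
    amul A hI μ (dirac A 0) = μ := by
  apply Subtype.ext
  funext f
  by_cases hf : f ∈ A.carrier
  · rw [amul_apply A hI _ _ hf]
    have h2 : Tmap A (dirac A 0) f = f := by
      funext x
      show (dirac A 0).1 (fun z => f (z + x)) = f x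
      rw [dirac_apply A (A.translate_mem f hf x), zero_add]
    rw [h2]
  · rw [amul_apply' A hI _ _ hf, char_zero A μ hf]

theorem amul_dirac_dirac (hI : Introverted A) (a b : RN N) :
    amul A hI (dirac A a) (dirac A b) = dirac A (a + b) := by
  apply Subtype.ext
  funext f
  by_cases hf : f ∈ A.carrier
  · rw [amul_apply A hI _ _ hf, dirac_apply A (Tmap_mem A hI _ hf), dirac_apply A hf]
    show (dirac A b).1 (fun z => f (z + a)) = f (a + b)
    rw [dirac_apply A (A.translate_mem f hf a), add_comm b a]
  · rw [amul_apply' A hI _ _ hf]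
    show 0 = (dirac A (a+b)).1 f
    classical
    simp [dirac, diracFun, hf]

end Stmt8
namespace Stmt8

variable {N : ℕ} (A : MVAlgebra N)

theorem eval_continuous (g : RN N → ℂ) : Continuous fun μ : Spectrum' A => μ.1 g :=
  (continuous_apply g).comp continuous_subtype_val

theorem amul_continuous (hI : Introverted A) (hAP : ∀ f ∈ A.carrier, IsAP f) :
    Continuous fun p : Spectrum' A × Spectrum' A => amul A hI p.1 p.2 := by
  classical
  apply continuous_induced_rng.2
  apply continuous_pi
  intro g
  show Continuous fun p : Spectrum' A × Spectrum' A => (amul A hI p.1 p.2).1 g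
  by_cases hg : g ∈ A.carrier
  · -- the map p ↦ p.1.1 (Tmap A p.2 g)
    have heq : (fun p : Spectrum' A × Spectrum' A => (amul A hI p.1 p.2).1 g) =
        fun p => p.1.1 (Tmap A p.2 g) := by
      funext p; exact amul_apply A hI p.1 p.2 hg
    rw [heq]
    rw [continuous_iff_continuousAt]
    rintro ⟨μ₀, ν₀⟩
    rw [ContinuousAt, Metric.tendsto_nhds]
    intro ε hε
    obtain ⟨t, ht⟩ := orbit_net (hAP g hg) (show (0:ℝ) < ε / 8 by linarith)
    set U : Set (Spectrum' A × Spectrum' A) :=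
      {p | (∀ b ∈ t, ‖p.2.1 (fun z => g (z + b)) - ν₀.1 (fun z => g (z + b))‖ < ε / 8) ∧
        ‖p.1.1 (Tmap A ν₀ g) - μ₀.1 (Tmap A ν₀ g)‖ < ε / 2} with hU
    have hUopen : IsOpen U := by
      have h1 : U = (⋂ b ∈ t, {p : Spectrum' A × Spectrum' A |
          ‖p.2.1 (fun z => g (z + b)) - ν₀.1 (fun z => g (z + b))‖ < ε / 8}) ∩
          {p | ‖p.1.1 (Tmap A ν₀ g) - μ₀.1 (Tmap A ν₀ g)‖ < ε / 2} := by
        ext p; simp [hU]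
      rw [h1]
      refine IsOpen.inter (isOpen_biInter_finset fun b _ => ?_) ?_
      · have : Continuous fun p : Spectrum' A × Spectrum' A =>
            ‖p.2.1 (fun z => g (z + b)) - ν₀.1 (fun z => g (z + b))‖ :=
          (((eval_continuous A _).comp continuous_snd).sub continuous_const).norm
        exact isOpen_lt this continuous_const
      · have : Continuous fun p : Spectrum' A × Spectrum' A =>
            ‖p.1.1 (Tmap A ν₀ g) - μ₀.1 (Tmap A ν₀ g)‖ :=
          (((eval_continuous A _).comp continuous_fst).sub continuous_const).norm
        exact isOpen_lt this continuous_const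
    have hUmem : (μ₀, ν₀) ∈ U := by
      constructor
      · intro b _
        simp only [sub_self, norm_zero]
        linarith
      · simp only [sub_self, norm_zero]
        linarith
    filter_upwards [hUopen.mem_nhds hUmem] with p hp
    obtain ⟨hp1, hp2⟩ := hp
    rw [dist_eq_norm]
    have hTb : ∀ x, ‖Tmap A p.2 g x - Tmap A ν₀ g x‖ ≤ 3 * (ε / 8) := by
      intro x
      obtain ⟨b, hb, hbz⟩ := ht x
      have e1 : ‖p.2.1 (fun z => g (z + x)) - p.2.1 (fun z => g (z + b))‖ ≤ ε / 8 :=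
        char_dist A p.2 (A.translate_mem g hg x) (A.translate_mem g hg b) hbz
      have e2 : ‖p.2.1 (fun z => g (z + b)) - ν₀.1 (fun z => g (z + b))‖ < ε / 8 := hp1 b hb
      have e3 : ‖ν₀.1 (fun z => g (z + b)) - ν₀.1 (fun z => g (z + x))‖ ≤ ε / 8 := by
        have := char_dist A ν₀ (A.translate_mem g hg b) (A.translate_mem g hg x)
          (fun z => by rw [norm_sub_rev]; exact hbz z)
        exact this
      have h4 := norm_sub_le_norm_sub_add_norm_sub (p.2.1 (fun z => g (z + x)))
        (p.2.1 (fun z => g (z + b))) (ν₀.1 (fun z => g (z + x)))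
      have h5 := norm_sub_le_norm_sub_add_norm_sub (p.2.1 (fun z => g (z + b)))
        (ν₀.1 (fun z => g (z + b))) (ν₀.1 (fun z => g (z + x)))
      show ‖p.2.1 (fun z => g (z + x)) - ν₀.1 (fun z => g (z + x))‖ ≤ 3 * (ε / 8)
      linarith
    have e1 : ‖p.1.1 (Tmap A p.2 g) - p.1.1 (Tmap A ν₀ g)‖ ≤ 3 * (ε / 8) :=
      char_dist A p.1 (Tmap_mem A hI p.2 hg) (Tmap_mem A hI ν₀ hg) hTb
    have h6 := norm_sub_le_norm_sub_add_norm_sub (p.1.1 (Tmap A p.2 g))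
      (p.1.1 (Tmap A ν₀ g)) (μ₀.1 (Tmap A ν₀ g))
    linarith
  · have heq : (fun p : Spectrum' A × Spectrum' A => (amul A hI p.1 p.2).1 g) = fun _ => 0 := by
      funext p; exact amul_apply' A hI p.1 p.2 hg
    rw [heq]
    exact continuous_const

end Stmt8
namespace Stmt8

variable {N : ℕ} (A : MVAlgebra N)

theorem dirac_nhds (μ : Spectrum' A) : ∀ t ∈ 𝓝 μ, ∃ a : RN N, dirac A a ∈ t := by
  classical
  intro t ht
  rw [nhds_subtype_eq_comap, Filter.mem_comap] at ht
  obtain ⟨s, hs, hst⟩ := ht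
  obtain ⟨O, hOs, hOopen, hμO⟩ := mem_nhds_iff.1 hs
  obtain ⟨I, u, hIu, hpi⟩ := isOpen_pi_iff.1 hOopen μ.1 hμO
  have hδ : ∀ g : RN N → ℂ, ∃ δ : ℝ, 0 < δ ∧ (g ∈ I → Metric.ball (μ.1 g) δ ⊆ u g) := by
    intro g
    by_cases hg : g ∈ I
    · obtain ⟨δ, hδ, hball⟩ := Metric.isOpen_iff.1 (hIu g hg).1 (μ.1 g) (hIu g hg).2
      exact ⟨δ, hδ, fun _ => hball⟩
    · exact ⟨1, one_pos, fun h => absurd h hg⟩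
  choose δ hδpos hδball using hδ
  obtain ⟨ε, hε, hεle⟩ : ∃ ε : ℝ, 0 < ε ∧ ∀ g ∈ I, ε ≤ δ g := by
    rcases I.eq_empty_or_nonempty with hI0 | hI0
    · exact ⟨1, one_pos, fun g hg => by simp [hI0] at hg⟩
    · exact ⟨I.inf' hI0 δ, (Finset.lt_inf'_iff hI0).2 fun g _ => hδpos g,
        fun g hg => Finset.inf'_le δ hg⟩
  obtain ⟨a, ha⟩ := dirac_dense A μ (I.filter (· ∈ A.carrier))
    (fun g hg => (Finset.mem_filter.1 hg).2) hε
  refine ⟨a, hst ?_⟩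
  show (dirac A a).1 ∈ s
  apply hOs
  apply hpi
  intro g hg
  simp only [Set.mem_pi] at *
  by_cases hgA : g ∈ A.carrier
  · have h1 : ‖μ.1 g - g a‖ < ε := ha g (Finset.mem_filter.2 ⟨hg, hgA⟩)
    have h2 : (dirac A a).1 g = g a := dirac_apply A hgA
    apply hδball g hg
    rw [h2, Metric.mem_ball, dist_eq_norm, norm_sub_rev]
    exact h1.trans_le (hεle g hg)
  · have h2 : (dirac A a).1 g = 0 := by
      classical
      simp [dirac, diracFun, hgA]
    rw [h2, ← char_zero A μ hgA]
    exact (hIu g hg).2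

theorem exists_inv (hI : Introverted A) (hAP : ∀ f ∈ A.carrier, IsAP f) (μ : Spectrum' A) :
    ∃ ν : Spectrum' A, amul A hI μ ν = dirac A 0 ∧ amul A hI ν μ = dirac A 0 := by
  classical
  have hne : (Filter.comap (fun a : RN N => dirac A a) (𝓝 μ)).NeBot :=
    Filter.comap_neBot fun t ht => (dirac_nhds A μ t ht).imp fun a ha => ha
  set 𝒰 := Ultrafilter.of (Filter.comap (fun a : RN N => dirac A a) (𝓝 μ)) with h𝒰
  have h1 : Tendsto (fun a : RN N => dirac A a) 𝒰 (𝓝 μ) :=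
    le_trans (Filter.map_mono (Ultrafilter.of_le _)) Filter.map_comap_le
  obtain ⟨ν, -, hν⟩ := isCompact_univ.ultrafilter_le_nhds
    (𝒰.map fun a : RN N => dirac A (-a)) (by simp)
  have h2 : Tendsto (fun a : RN N => dirac A (-a)) 𝒰 (𝓝 ν) := hν
  have hmulcont := amul_continuous A hI hAP
  refine ⟨ν, ?_, ?_⟩
  · have h3 : Tendsto (fun a : RN N => amul A hI (dirac A a) (dirac A (-a))) 𝒰
        (𝓝 (amul A hI μ ν)) :=
      (hmulcont.tendsto (μ, ν)).comp (h1.prodMk_nhds h2)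
    have h4 : (fun a : RN N => amul A hI (dirac A a) (dirac A (-a))) = fun _ => dirac A 0 := by
      funext a
      rw [amul_dirac_dirac A hI a (-a), add_neg_cancel]
    rw [h4] at h3
    exact tendsto_nhds_unique h3 tendsto_const_nhds
  · have h3 : Tendsto (fun a : RN N => amul A hI (dirac A (-a)) (dirac A a)) 𝒰
        (𝓝 (amul A hI ν μ)) :=
      (hmulcont.tendsto (ν, μ)).comp (h2.prodMk_nhds h1)
    have h4 : (fun a : RN N => amul A hI (dirac A (-a)) (dirac A a)) = fun _ => dirac A 0 := by
      funext a
      rw [amul_dirac_dirac A hI (-a) a, neg_add_cancel]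
    rw [h4] at h3
    exact tendsto_nhds_unique h3 tendsto_const_nhds

def ainv (hI : Introverted A) (hAP : ∀ f ∈ A.carrier, IsAP f) (μ : Spectrum' A) : Spectrum' A :=
  (exists_inv A hI hAP μ).choose

theorem ainv_spec (hI : Introverted A) (hAP : ∀ f ∈ A.carrier, IsAP f) (μ : Spectrum' A) :
    amul A hI μ (ainv A hI hAP μ) = dirac A 0 ∧ amul A hI (ainv A hI hAP μ) μ = dirac A 0 :=
  (exists_inv A hI hAP μ).choose_spec

theorem inv_unique (hI : Introverted A) {μ ν ν' : Spectrum' A}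
    (h1 : amul A hI μ ν = dirac A 0 ∧ amul A hI ν μ = dirac A 0)
    (h2 : amul A hI μ ν' = dirac A 0 ∧ amul A hI ν' μ = dirac A 0) : ν = ν' := by
  calc ν = amul A hI ν (dirac A 0) := (amul_dirac_zero_right A hI ν).symm
    _ = amul A hI ν (amul A hI μ ν') := by rw [h2.1]
    _ = amul A hI (amul A hI ν μ) ν' := (amul_assoc A hI ν μ ν').symm
    _ = amul A hI (dirac A 0) ν' := by rw [h1.2]
    _ = ν' := amul_dirac_zero_left A hI ν'

theorem ainv_continuous (hI : Introverted A) (hAP : ∀ f ∈ A.carrier, IsAP f) :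
    Continuous (ainv A hI hAP) := by
  have hmulcont := amul_continuous A hI hAP
  have hG : IsClosed {p : Spectrum' A × Spectrum' A |
      amul A hI p.1 p.2 = dirac A 0 ∧ amul A hI p.2 p.1 = dirac A 0} := by
    refine IsClosed.inter (isClosed_eq hmulcont continuous_const) ?_
    exact isClosed_eq (hmulcont.comp (continuous_snd.prodMk continuous_fst)) continuous_const
  rw [continuous_iff_continuousAt]
  intro μ
  rw [ContinuousAt, Filter.tendsto_iff_ultrafilter]
  intro u hu
  obtain ⟨y, -, hy⟩ := isCompact_univ.ultrafilter_le_nhds (u.map (ainv A hI hAP)) (by simp)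
  have hy' : Tendsto (ainv A hI hAP) u (𝓝 y) := hy
  have hid : Tendsto (fun x : Spectrum' A => x) u (𝓝 μ) := hu
  have htup : Tendsto (fun x => (x, ainv A hI hAP x)) u (𝓝 (μ, y)) :=
    hid.prodMk_nhds hy'
  have hmem : (μ, y) ∈ {p : Spectrum' A × Spectrum' A |
      amul A hI p.1 p.2 = dirac A 0 ∧ amul A hI p.2 p.1 = dirac A 0} :=
    hG.mem_of_tendsto htup (Filter.Eventually.of_forall fun x => ainv_spec A hI hAP x)
  have : y = ainv A hI hAP μ :=
    inv_unique A hI ⟨hmem.1, hmem.2⟩ (ainv_spec A hI hAP μ)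
  rwa [this] at hy'

end Stmt8
namespace Stmt8

variable {N : ℕ} (A : MVAlgebra N)

def bcfOf (f : RN N → ℂ) (h : IsBUC f) : BoundedContinuousFunction (RN N) ℂ :=
  ⟨⟨f, h.2.continuous⟩, by
    obtain ⟨C, hC⟩ := Metric.isBounded_iff.1 h.1
    exact ⟨C, fun x y => hC ⟨x, rfl⟩ ⟨y, rfl⟩⟩⟩

@[simp] theorem bcfOf_apply (f : RN N → ℂ) (h : IsBUC f) (x : RN N) : bcfOf f h x = f x := rfl

set_option synthInstance.maxHeartbeats 1000000 in
theorem ap_of_group (hI : Introverted A)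
    (mul : Spectrum' A → Spectrum' A → Spectrum' A)
    (harens : IsArensMul A mul)
    (hassoc : ∀ μ ν ρ : Spectrum' A, mul (mul μ ν) ρ = mul μ (mul ν ρ))
    (hcont : Continuous fun p : Spectrum' A × Spectrum' A => mul p.1 p.2)
    (e : Spectrum' A) (he : ∀ μ, mul e μ = μ ∧ mul μ e = μ)
    (inv : Spectrum' A → Spectrum' A)
    (hinv : ∀ μ, mul μ (inv μ) = e ∧ mul (inv μ) μ = e) :
    ∀ f ∈ A.carrier, IsAP f := by
  intro f hf
  -- key evaluation formula
  have hkey : ∀ (x : RN N) (σ : Spectrum' A), (mul (dirac A x) σ).1 f = Tmap A σ f x := by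
    intro x σ
    rw [harens (dirac A x) σ f hf]
    exact dirac_apply A (Tmap_mem A hI σ hf)
  -- the map Φ
  set Φ : Spectrum' A → BoundedContinuousFunction (RN N) ℂ :=
    fun σ => bcfOf (Tmap A σ f) (A.buc _ (Tmap_mem A hI σ hf)) with hΦ
  have hΦcont : Continuous Φ := by
    rw [continuous_iff_continuousAt]
    intro ν₀
    rw [ContinuousAt, Metric.tendsto_nhds]
    intro ε hε
    -- tube lemma to get a neighborhood W of e
    have hF : Continuous fun σ : Spectrum' A => σ.1 f := eval_continuous A f
    have hh : Continuous fun p : Spectrum' A × Spectrum' A =>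
        ‖(mul p.1 p.2).1 f - p.1.1 f‖ :=
      ((hF.comp hcont).sub (hF.comp continuous_fst)).norm
    have hopen : IsOpen {p : Spectrum' A × Spectrum' A | ‖(mul p.1 p.2).1 f - p.1.1 f‖ < ε / 2} :=
      isOpen_lt hh continuous_const
    have hsub : Set.univ ×ˢ ({e} : Set (Spectrum' A)) ⊆
        {p | ‖(mul p.1 p.2).1 f - p.1.1 f‖ < ε / 2} := by
      rintro ⟨τ, w⟩ ⟨-, hw⟩
      simp only [Set.mem_singleton_iff] at hw
      subst hw
      simp only [Set.mem_setOf_eq]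
      rw [(he τ).2]
      simp only [sub_self, norm_zero]
      linarith
    obtain ⟨u, W, -, hWopen, huniv, heW, huW⟩ :=
      generalized_tube_lemma isCompact_univ isCompact_singleton hopen hsub
    have heW' : e ∈ W := heW rfl
    -- the neighborhood of ν₀
    have hVcont : Continuous fun ν : Spectrum' A => mul (inv ν₀) ν :=
      hcont.comp (continuous_const.prodMk continuous_id)
    have hV : (fun ν : Spectrum' A => mul (inv ν₀) ν) ⁻¹' W ∈ 𝓝 ν₀ := by
      apply (hWopen.preimage hVcont).mem_nhds
      show mul (inv ν₀) ν₀ ∈ W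
      rw [(hinv ν₀).2]
      exact heW'
    filter_upwards [hV] with ν hν
    have hle : dist (Φ ν) (Φ ν₀) ≤ ε / 2 := by
      rw [BoundedContinuousFunction.dist_le (by linarith : (0:ℝ) ≤ ε/2)]
      intro x
      show dist (Tmap A ν f x) (Tmap A ν₀ f x) ≤ ε / 2
      rw [← hkey x ν₀, ← hkey x ν]
      have hgrp : mul (mul (dirac A x) ν₀) (mul (inv ν₀) ν) = mul (dirac A x) ν := by
        rw [hassoc, ← hassoc ν₀ (inv ν₀) ν, (hinv ν₀).1, (he ν).1]
      have hmem := huW (Set.mk_mem_prod (huniv (Set.mem_univ (mul (dirac A x) ν₀))) hν)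
      rw [Set.mem_setOf_eq, hgrp] at hmem
      rw [dist_eq_norm]
      linarith
    linarith
  -- conclude compactness
  refine ⟨bcfOf f (A.buc f hf), rfl, ?_⟩
  have hrange : (Set.range fun a : RN N => translateBCF (bcfOf f (A.buc f hf)) a) ⊆
      Set.range Φ := by
    rintro - ⟨a, rfl⟩
    refine ⟨dirac A a, ?_⟩
    apply BoundedContinuousFunction.ext
    intro z
    show Tmap A (dirac A a) f z = f (z + a)
    rw [show Tmap A (dirac A a) f z = (dirac A a).1 fun w => f (w + z) from rfl,
      dirac_apply A (A.translate_mem f hf z), add_comm a z]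
  have hC : IsCompact (Set.range Φ) := isCompact_range hΦcont
  exact hC.of_isClosed_subset isClosed_closure
    (closure_minimal hrange hC.isClosed)

end Stmt8
/-- For an algebra with mean value `A`, the spectrum `Δ(A)` is a
(compact) topological group under the Arens product — which requires `A` to be
introverted for the product to be defined — if and only if `A` is a (closed)
subalgebra of the almost periodic functions. -/
theorem stmt8 {N : ℕ} (A : MVAlgebra N) :
    (Introverted A ∧
      ∃ mul : Spectrum' A → Spectrum' A → Spectrum' A,
        IsArensMul A mul ∧
        (∀ μ ν ρ : Spectrum' A, mul (mul μ ν) ρ = mul μ (mul ν ρ)) ∧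
        Continuous (fun p : Spectrum' A × Spectrum' A => mul p.1 p.2) ∧
        ∃ e : Spectrum' A, (∀ μ, mul e μ = μ ∧ mul μ e = μ) ∧
          ∃ inv : Spectrum' A → Spectrum' A, Continuous inv ∧
            ∀ μ, mul μ (inv μ) = e ∧ mul (inv μ) μ = e)
    ↔ (∀ f ∈ A.carrier, IsAP f) := by
  constructor
  · rintro ⟨hI, mul, harens, hassoc, hcont, e, he, inv, -, hinv⟩
    exact Stmt8.ap_of_group A hI mul harens hassoc hcont e he inv hinv
  · intro hAP
    have hI : Introverted A := Stmt8.introverted_of_ap A hAP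
    refine ⟨hI, Stmt8.amul A hI, Stmt8.amul_arens A hI, Stmt8.amul_assoc A hI,
      Stmt8.amul_continuous A hI hAP, Stmt8.dirac A 0,
      fun μ => ⟨Stmt8.amul_dirac_zero_left A hI μ, Stmt8.amul_dirac_zero_right A hI μ⟩,
      Stmt8.ainv A hI hAP, Stmt8.ainv_continuous A hI hAP,
      fun μ => Stmt8.ainv_spec A hI hAP μ⟩
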